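/- For every δ ∈ (0,1) there exists a constant C = C(δ) > 0 such that for every natural number n and every real t with 0 < t < π, | (1/A_n^δ) · Σ_{k=0}^{n} A_{n−k}^{δ−1} · cos((2k+1)t) | ≤ C · ( 1/((n+1)^δ · (sin t)^δ) + 1/((n+1) · sin t) ). -/

import Mathlib

open Finset

/-- Cesàro numbers: `A_n^δ = (δ+1)(δ+2)⋯(δ+n)/n!`, with `A_0^δ = 1`. -/
noncomputable def cesaroA (δ : ℝ) (n : ℕ) : ℝ :=
  (∏ i ∈ Finset.range n, (δ + i + 1)) / n.factorial

namespace CesaroAux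

lemma cesaroA_succ (δ : ℝ) (n : ℕ) :
    cesaroA δ (n + 1) = cesaroA δ n * ((δ + n + 1) / (n + 1)) := by
  have h1 : (n.factorial : ℝ) ≠ 0 := Nat.cast_ne_zero.mpr n.factorial_ne_zero
  have h2 : ((n : ℝ) + 1) ≠ 0 := by positivity
  rw [cesaroA, cesaroA, prod_range_succ, Nat.factorial_succ, div_mul_div_comm]
  push_cast
  ring

lemma cesaroA_pos {δ : ℝ} (hδ : -1 < δ) (n : ℕ) : 0 < cesaroA δ n := by
  apply div_pos
  · apply prod_pos
    intro i _
    have : (0:ℝ) ≤ i := Nat.cast_nonneg i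
    linarith
  · exact_mod_cast n.factorial_pos

lemma cesaroA_pred (δ : ℝ) (n : ℕ) :
    cesaroA (δ - 1) (n + 1) = cesaroA δ n * (δ / (n + 1)) := by
  have h1 : (n.factorial : ℝ) ≠ 0 := Nat.cast_ne_zero.mpr n.factorial_ne_zero
  have h2 : ((n : ℝ) + 1) ≠ 0 := by positivity
  rw [cesaroA, cesaroA, prod_range_succ', Nat.factorial_succ]
  have h3 : ∀ i ∈ range n, (δ - 1 + ((i:ℕ)+1 : ℕ) + 1) = δ + i + 1 := by
    intro i _; push_cast; ring
  rw [prod_congr rfl h3, div_mul_div_comm]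
  push_cast
  ring

lemma sum_cesaroA (δ : ℝ) (n : ℕ) :
    ∑ m ∈ range (n + 1), cesaroA (δ - 1) m = cesaroA δ n := by
  induction n with
  | zero => simp [cesaroA]
  | succ n ih =>
    rw [sum_range_succ, ih, cesaroA_pred, cesaroA_succ]
    have h2 : ((n : ℝ) + 1) ≠ 0 := by positivity
    field_simp
    ring

lemma cesaroA_succ_le {δ : ℝ} (hδ0 : 0 < δ) (hδ1 : δ < 1) (m : ℕ) :
    cesaroA (δ - 1) (m + 1) ≤ cesaroA (δ - 1) m := by
  rw [cesaroA_succ]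
  have hb := cesaroA_pos (δ := δ - 1) (by linarith) m
  have h : (δ - 1 + m + 1) / (m + 1) ≤ 1 := by
    rw [div_le_one (by positivity)]
    linarith
  calc cesaroA (δ - 1) m * ((δ - 1 + m + 1) / (m + 1))
      ≤ cesaroA (δ - 1) m * 1 := by
        apply mul_le_mul_of_nonneg_left h hb.le
    _ = cesaroA (δ - 1) m := mul_one _

lemma cesaroA_anti {δ : ℝ} (hδ0 : 0 < δ) (hδ1 : δ < 1) : Antitone (cesaroA (δ - 1)) :=
  antitone_nat_of_succ_le (cesaroA_succ_le hδ0 hδ1)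


lemma le_cesaroA {δ : ℝ} (hδ0 : 0 < δ) (hδ1 : δ < 1) (n : ℕ) :
    ((n : ℝ) + 1) ^ δ ≤ cesaroA δ n := by
  induction n with
  | zero => simp [cesaroA]
  | succ n ih =>
    rw [cesaroA_succ]
    push_cast
    have hx : (0:ℝ) < (n : ℝ) + 1 := by positivity
    have hber : (1 + 1 / ((n:ℝ) + 1)) ^ δ ≤ 1 + δ * (1 / ((n:ℝ)+1)) := by
      refine rpow_one_add_le_one_add_mul_self ?_ hδ0.le hδ1.le
      have : (0:ℝ) ≤ 1 / ((n:ℝ)+1) := by positivity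
      linarith
    have hsplit : ((n:ℝ) + 1 + 1) = ((n:ℝ) + 1) * (1 + 1 / ((n:ℝ)+1)) := by
      field_simp
    calc ((n:ℝ) + 1 + 1) ^ δ
        = (((n:ℝ) + 1) * (1 + 1 / ((n:ℝ)+1))) ^ δ := by push_cast; rw [hsplit]
      _ = ((n:ℝ) + 1) ^ δ * (1 + 1 / ((n:ℝ)+1)) ^ δ :=
          Real.mul_rpow (by positivity) (by positivity)
      _ ≤ cesaroA δ n * ((δ + n + 1) / (n + 1)) := by
          apply mul_le_mul ih ?_ (by positivity)
            ((Real.rpow_nonneg (by positivity) δ).trans ih)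
          calc (1 + 1 / ((n:ℝ)+1)) ^ δ ≤ 1 + δ * (1 / ((n:ℝ)+1)) := hber
            _ = (δ + n + 1) / (n + 1) := by field_simp; ring

lemma cesaroA_pred_le {δ : ℝ} (hδ0 : 0 < δ) (hδ1 : δ < 1) (m : ℕ) :
    cesaroA (δ - 1) m ≤ ((m : ℝ) + 1) ^ (δ - 1) := by
  induction m with
  | zero => simp [cesaroA]
  | succ m ih =>
    rw [cesaroA_succ]
    push_cast
    have hx : (0:ℝ) < (m : ℝ) + 1 := by positivity
    set x : ℝ := 1 / ((m:ℝ) + 1) with hxdef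
    have hx0 : 0 < x := by positivity
    have hx1 : x ≤ 1 := by
      rw [hxdef, div_le_one hx]; linarith [Nat.cast_nonneg (α := ℝ) m]
    have hb := cesaroA_pos (δ := δ - 1) (by linarith) m
    have hber : (1 + x) ^ (1 - δ) ≤ 1 + (1 - δ) * x :=
      rpow_one_add_le_one_add_mul_self (by linarith) (by linarith) (by linarith)
    have hpow : (0:ℝ) < (1 + x) ^ (1 - δ) := Real.rpow_pos_of_pos (by linarith) _
    -- key : (δ - 1 + m + 1)/(m+1) ≤ (1+x)^(δ-1)
    have hkey : (δ - 1 + (m:ℝ) + 1) / ((m:ℝ) + 1) ≤ (1 + x) ^ (δ - 1) := by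
      have h1 : (δ - 1 + (m:ℝ) + 1) / ((m:ℝ) + 1) = 1 - (1 - δ) * x := by
        rw [hxdef]; field_simp; ring
      have h2 : (1 + x) ^ (δ - 1) = 1 / (1 + x) ^ (1 - δ) := by
        rw [one_div, ← Real.rpow_neg (by linarith)]; ring_nf
      rw [h1, h2, le_div_iff₀ hpow]
      calc (1 - (1 - δ) * x) * (1 + x) ^ (1 - δ)
          ≤ (1 - (1 - δ) * x) * (1 + (1 - δ) * x) := by
            apply mul_le_mul_of_nonneg_left hber
            nlinarith
        _ = 1 - ((1 - δ) * x) ^ 2 := by ring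
        _ ≤ 1 := by nlinarith
    have hmul : ((m:ℝ) + 1) ^ (δ - 1) * (1 + x) ^ (δ - 1) = ((m:ℝ) + 1 + 1) ^ (δ - 1) := by
      rw [← Real.mul_rpow hx.le (by linarith)]
      congr 1
      rw [hxdef]; field_simp
    calc cesaroA (δ - 1) m * ((δ - 1 + (m:ℝ) + 1) / ((m:ℝ) + 1))
        ≤ ((m:ℝ) + 1) ^ (δ - 1) * ((1 + x) ^ (δ - 1)) := by
          apply mul_le_mul ih hkey
            (div_nonneg (by linarith [Nat.cast_nonneg (α := ℝ) m]) hx.le)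
            (Real.rpow_nonneg hx.le _)
      _ = ((m:ℝ) + 1 + 1) ^ (δ - 1) := hmul


lemma sum_rpow_le {δ : ℝ} (hδ0 : 0 < δ) (hδ1 : δ < 1) (M : ℕ) :
    ∑ m ∈ range M, ((m : ℝ) + 1) ^ (δ - 1) ≤ (M : ℝ) ^ δ / δ := by
  induction M with
  | zero => simp [Real.zero_rpow (ne_of_gt hδ0)]
  | succ M ih =>
    rw [sum_range_succ]
    have hx : (0:ℝ) < (M : ℝ) + 1 := by positivity
    have hM0 : (0:ℝ) ≤ (M:ℝ) := Nat.cast_nonneg M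
    have key : δ * ((M:ℝ) + 1) ^ (δ - 1) ≤ ((M:ℝ) + 1) ^ δ - (M:ℝ) ^ δ := by
      have hsplit : (M:ℝ) = ((M:ℝ) + 1) * (1 + (-1 / ((M:ℝ) + 1))) := by
        field_simp
        ring
      have hber : (1 + (-1 / ((M:ℝ)+1))) ^ δ ≤ 1 + δ * (-1 / ((M:ℝ)+1)) := by
        refine rpow_one_add_le_one_add_mul_self ?_ hδ0.le hδ1.le
        rw [neg_div, neg_le, neg_neg, div_le_one hx]
        linarith
      have h1 : (M:ℝ) ^ δ ≤ ((M:ℝ)+1) ^ δ * (1 + δ * (-1 / ((M:ℝ)+1))) := by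
        calc (M:ℝ) ^ δ = (((M:ℝ)+1) * (1 + (-1/((M:ℝ)+1)))) ^ δ := by rw [← hsplit]
          _ = ((M:ℝ)+1) ^ δ * (1 + (-1/((M:ℝ)+1))) ^ δ := by
              refine Real.mul_rpow hx.le ?_
              have : (-1:ℝ)/((M:ℝ)+1) = -(1/((M:ℝ)+1)) := by ring
              rw [this]
              have h1x : 1/((M:ℝ)+1) ≤ 1 := by rw [div_le_one hx]; linarith
              linarith
          _ ≤ ((M:ℝ)+1) ^ δ * (1 + δ * (-1 / ((M:ℝ)+1))) := by
              apply mul_le_mul_of_nonneg_left hber (Real.rpow_nonneg hx.le _)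
      have h2 : ((M:ℝ)+1) ^ δ * (1 + δ * (-1 / ((M:ℝ)+1)))
          = ((M:ℝ)+1) ^ δ - δ * ((M:ℝ)+1) ^ (δ - 1) := by
        have hpow : ((M:ℝ)+1) ^ (δ - 1) = ((M:ℝ)+1) ^ δ / ((M:ℝ)+1) := by
          rw [Real.rpow_sub hx, Real.rpow_one]
        rw [hpow]
        field_simp
        ring
      rw [h2] at h1
      linarith
    have : ((M:ℝ) + 1) ^ (δ - 1) ≤ ((M:ℝ)+1) ^ δ / δ - (M:ℝ) ^ δ / δ := by
      rw [div_sub_div_same, le_div_iff₀ hδ0]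
      linarith [key]
    push_cast
    linarith [ih, this]

lemma two_sin_mul_sum_cos (t : ℝ) (j : ℕ) :
    2 * Real.sin t * ∑ k ∈ range j, Real.cos ((2 * (k:ℝ) + 1) * t)
      = Real.sin (2 * (j:ℝ) * t) := by
  induction j with
  | zero => simp
  | succ j ih =>
    rw [sum_range_succ, mul_add, ih]
    have h := Real.sin_sub_sin (2 * ((j:ℝ)+1) * t) (2 * (j:ℝ) * t)
    have e1 : (2 * ((j:ℝ)+1) * t - 2 * (j:ℝ) * t) / 2 = t := by ring
    have e2 : (2 * ((j:ℝ)+1) * t + 2 * (j:ℝ) * t) / 2 = (2 * (j:ℝ) + 1) * t := by ring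
    rw [e1, e2] at h
    push_cast
    linarith [h]

lemma abs_sum_cos_le {t : ℝ} (hs : 0 < Real.sin t) (j : ℕ) :
    |∑ k ∈ range j, Real.cos ((2 * (k:ℝ) + 1) * t)| ≤ 1 / (2 * Real.sin t) := by
  have h := two_sin_mul_sum_cos t j
  have h2 : ∑ k ∈ range j, Real.cos ((2 * (k:ℝ) + 1) * t)
      = Real.sin (2 * (j:ℝ) * t) / (2 * Real.sin t) := by
    rw [eq_div_iff (by positivity)]
    linarith [h]
  rw [h2, abs_div, abs_of_pos (by positivity : (0:ℝ) < 2 * Real.sin t)]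
  gcongr
  exact Real.abs_sin_le_one _


lemma key_bound {δ : ℝ} (hδ0 : 0 < δ) (hδ1 : δ < 1) (n : ℕ) {t : ℝ}
    (hs0 : 0 < Real.sin t) :
    |∑ k ∈ range (n + 1), cesaroA (δ - 1) (n - k) * Real.cos ((2 * (k:ℝ) + 1) * t)|
      ≤ 3 / δ * Real.sin t ^ (-δ) := by
  set s := Real.sin t with hsdef
  have hs1 : s ≤ 1 := Real.sin_le_one t
  have hinv1 : (1:ℝ) ≤ 1 / s := by rw [le_div_iff₀ hs0]; linarith
  set M : ℕ := min (n + 1) ⌈1 / s⌉₊ with hMdef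
  have hM1 : 1 ≤ M :=
    le_min (Nat.succ_le_succ (Nat.zero_le n)) (Nat.one_le_ceil_iff.mpr (by positivity))
  have hMn : M ≤ n + 1 := min_le_left _ _
  have hM2 : (M : ℝ) ≤ 2 / s := by
    have h1 : (⌈1/s⌉₊ : ℝ) < 1/s + 1 := Nat.ceil_lt_add_one (by positivity)
    have h2 : (M:ℝ) ≤ (⌈1/s⌉₊ : ℝ) := Nat.cast_le.mpr (min_le_right _ _)
    have h3 : 2/s = 1/s + 1/s := by ring
    linarith
  have hMpos : (0:ℝ) < M := by exact_mod_cast hM1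
  set J : ℕ := n + 1 - M with hJdef
  have hJM : J + M = n + 1 := Nat.sub_add_cancel hMn
  have hMright : M < n + 1 → (1:ℝ)/s ≤ M := by
    intro h
    have : M = ⌈1/s⌉₊ := by
      rcases min_cases (n+1) ⌈1/s⌉₊ with ⟨h1, h2⟩ | ⟨h1, h2⟩
      · omega
      · omega
    rw [this]
    exact Nat.le_ceil _
  clear_value M J
  have hspos : (0:ℝ) < s ^ (-δ) := Real.rpow_pos_of_pos hs0 _
  -- notation
  set f : ℕ → ℝ := fun k => cesaroA (δ - 1) (n - k) with hf
  set g : ℕ → ℝ := fun k => Real.cos ((2 * (k:ℝ) + 1) * t) with hg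
  have hfnonneg : ∀ k, 0 ≤ f k := fun k => (cesaroA_pos (by linarith) _).le
  have hanti := cesaroA_anti hδ0 hδ1
  have hG : ∀ j, |∑ i ∈ range j, g i| ≤ 1 / (2 * s) := fun j => abs_sum_cos_le hs0 j
  -- tail bound
  have htail : |∑ i ∈ range M, f (J + i) * g (J + i)| ≤ 2 / δ * s ^ (-δ) := by
    have h1 : |∑ i ∈ range M, f (J + i) * g (J + i)| ≤ ∑ i ∈ range M, f (J + i) := by
      refine (Finset.abs_sum_le_sum_abs _ _).trans (Finset.sum_le_sum fun i _ => ?_)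
      rw [abs_mul]
      calc |f (J + i)| * |g (J + i)| ≤ f (J + i) * 1 := by
            apply mul_le_mul (le_of_eq (abs_of_nonneg (hfnonneg _)))
              (Real.abs_cos_le_one _) (abs_nonneg _) (hfnonneg _)
        _ = f (J + i) := mul_one _
    have h2 : ∑ i ∈ range M, f (J + i) = ∑ m ∈ range M, cesaroA (δ - 1) m := by
      have h3 : ∀ i ∈ range M, f (J + i) = cesaroA (δ - 1) (M - 1 - i) := by
        intro i hi
        rw [mem_range] at hi
        have harg : n - (J + i) = M - 1 - i := by omega
        simp only [hf]
        rw [harg]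
      rw [Finset.sum_congr rfl h3, Finset.sum_range_reflect]
    have h4 : ∑ m ∈ range M, cesaroA (δ - 1) m ≤ (M:ℝ) ^ δ / δ := by
      calc ∑ m ∈ range M, cesaroA (δ - 1) m
          ≤ ∑ m ∈ range M, ((m:ℝ) + 1) ^ (δ - 1) :=
            Finset.sum_le_sum fun m _ => cesaroA_pred_le hδ0 hδ1 m
        _ ≤ (M:ℝ) ^ δ / δ := sum_rpow_le hδ0 hδ1 M
    have h5 : (M:ℝ) ^ δ ≤ 2 * s ^ (-δ) := by
      calc (M:ℝ) ^ δ ≤ (2 / s) ^ δ :=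
            Real.rpow_le_rpow (Nat.cast_nonneg M) hM2 hδ0.le
        _ = 2 ^ δ * (1 / s) ^ δ := by
            rw [← Real.mul_rpow (by norm_num) (by positivity)]
            congr 1; ring
        _ ≤ 2 * s ^ (-δ) := by
            have e1 : (1 / s) ^ δ = s ^ (-δ) := by
              rw [one_div, Real.inv_rpow hs0.le, ← Real.rpow_neg hs0.le]
            rw [e1]
            apply mul_le_mul_of_nonneg_right ?_ hspos.le
            calc (2:ℝ) ^ δ ≤ 2 ^ (1:ℝ) :=
                Real.rpow_le_rpow_of_exponent_le (by norm_num) hδ1.le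
              _ = 2 := Real.rpow_one 2
    rw [h2] at h1
    have h8 : (M:ℝ) ^ δ / δ ≤ 2 / δ * s ^ (-δ) := by
      have e : 2 / δ * s ^ (-δ) = 2 * s ^ (-δ) / δ := by ring
      rw [e]
      gcongr
    exact (h1.trans h4).trans h8
  -- head bound
  have hhead : |∑ i ∈ range J, f i * g i| ≤ s ^ (-δ) := by
    rcases Nat.eq_zero_or_pos J with hJ0 | hJpos
    · simp [hJ0, hspos.le]
    · have hMn' : M < n + 1 := by omega
      have hsM : (1:ℝ)/s ≤ M := hMright hMn'
      have hfJ : f (J - 1) = cesaroA (δ - 1) M := by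
        simp only [hf]; congr 1; omega
      have hmono : ∀ i, f i ≤ f (i + 1) := by
        intro i
        simp only [hf]
        exact hanti (Nat.sub_le_sub_left (Nat.le_succ i) n)
      have hbp := Finset.sum_range_by_parts f g J
      simp only [smul_eq_mul] at hbp
      rw [hbp]
      have hT1 : |f (J - 1) * ∑ i ∈ range J, g i| ≤ f (J - 1) * (1 / (2 * s)) := by
        rw [abs_mul, abs_of_nonneg (hfnonneg _)]
        exact mul_le_mul_of_nonneg_left (hG J) (hfnonneg _)
      have hT2 : |∑ i ∈ range (J - 1), (f (i + 1) - f i) * ∑ j ∈ range (i + 1), g j|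
          ≤ f (J - 1) * (1 / (2 * s)) := by
        calc |∑ i ∈ range (J - 1), (f (i + 1) - f i) * ∑ j ∈ range (i + 1), g j|
            ≤ ∑ i ∈ range (J - 1), (f (i + 1) - f i) * (1 / (2 * s)) := by
              refine (Finset.abs_sum_le_sum_abs _ _).trans (Finset.sum_le_sum fun i _ => ?_)
              rw [abs_mul, abs_of_nonneg (by linarith [hmono i])]
              exact mul_le_mul_of_nonneg_left (hG (i + 1)) (by linarith [hmono i])
          _ = (f (J - 1) - f 0) * (1 / (2 * s)) := by
              rw [← Finset.sum_mul, Finset.sum_range_sub f (J - 1)]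
          _ ≤ f (J - 1) * (1 / (2 * s)) := by
              apply mul_le_mul_of_nonneg_right ?_ (by positivity)
              linarith [hfnonneg 0]
      have hfM : f (J - 1) ≤ s ^ ((1:ℝ) - δ) := by
        rw [hfJ]
        calc cesaroA (δ - 1) M ≤ ((M:ℝ) + 1) ^ (δ - 1) := cesaroA_pred_le hδ0 hδ1 M
          _ ≤ (M:ℝ) ^ (δ - 1) :=
              Real.rpow_le_rpow_of_nonpos hMpos (by linarith) (by linarith)
          _ ≤ (1/s) ^ (δ - 1) :=
              Real.rpow_le_rpow_of_nonpos (by positivity) hsM (by linarith)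
          _ = s ^ ((1:ℝ) - δ) := by
              rw [one_div, Real.inv_rpow hs0.le, ← Real.rpow_neg hs0.le]
              congr 1; ring
      calc |f (J-1) * (∑ i ∈ range J, g i)
            - ∑ i ∈ range (J-1), (f (i+1) - f i) * ∑ j ∈ range (i+1), g j|
          ≤ f (J - 1) * (1 / (2 * s)) + f (J - 1) * (1 / (2 * s)) :=
            (abs_sub _ _).trans (add_le_add hT1 hT2)
        _ = f (J - 1) / s := by ring
        _ ≤ s ^ ((1:ℝ) - δ) / s := by gcongr
        _ = s ^ (-δ) := by
            rw [show (1:ℝ) - δ = -δ + 1 by ring, Real.rpow_add hs0, Real.rpow_one]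
            field_simp
  -- combine
  have hsum : ∑ k ∈ range (n + 1), f k * g k
      = (∑ k ∈ range J, f k * g k) + ∑ i ∈ range M, f (J + i) * g (J + i) := by
    rw [← hJM, Finset.sum_range_add]
  have h1δ : (1:ℝ) ≤ 1/δ := by rw [le_div_iff₀ hδ0]; linarith
  have hmul : 1 * s ^ (-δ) ≤ 1/δ * s ^ (-δ) := mul_le_mul_of_nonneg_right h1δ hspos.le
  have e3 : 3/δ * s ^ (-δ) = 2/δ * s ^ (-δ) + 1/δ * s ^ (-δ) := by ring
  calc |∑ k ∈ range (n + 1), cesaroA (δ - 1) (n - k) * Real.cos ((2 * (k:ℝ) + 1) * t)|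
      = |(∑ k ∈ range J, f k * g k) + ∑ i ∈ range M, f (J + i) * g (J + i)| := by
        rw [← hsum]
    _ ≤ |∑ k ∈ range J, f k * g k| + |∑ i ∈ range M, f (J + i) * g (J + i)| := abs_add_le _ _
    _ ≤ s ^ (-δ) + 2/δ * s ^ (-δ) := add_le_add hhead htail
    _ ≤ 3/δ * s ^ (-δ) := by linarith

end CesaroAux

theorem stmt_0 :
    ∀ δ : ℝ, 0 < δ → δ < 1 → ∃ C : ℝ, 0 < C ∧
      ∀ n : ℕ, ∀ t : ℝ, 0 < t → t < Real.pi →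
        |(1 / cesaroA δ n) *
            ∑ k ∈ Finset.range (n + 1), cesaroA (δ - 1) (n - k) * Real.cos ((2 * k + 1) * t)| ≤
          C * (1 / ((n + 1 : ℝ) ^ δ * Real.sin t ^ δ) + 1 / ((n + 1 : ℝ) * Real.sin t)) := by
  intro δ hδ0 hδ1
  refine ⟨3 / δ, by positivity, ?_⟩
  intro n t ht0 htπ
  have hs0 : 0 < Real.sin t := Real.sin_pos_of_pos_of_lt_pi ht0 htπ
  have hA : 0 < cesaroA δ n := CesaroAux.cesaroA_pos (by linarith) n
  have hpow : ((n:ℝ) + 1) ^ δ ≤ cesaroA δ n := CesaroAux.le_cesaroA hδ0 hδ1 n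
  have hkey := CesaroAux.key_bound hδ0 hδ1 n hs0
  have hppos : (0:ℝ) < ((n:ℝ) + 1) ^ δ := Real.rpow_pos_of_pos (by positivity) δ
  have hsp : (0:ℝ) < Real.sin t ^ δ := Real.rpow_pos_of_pos hs0 δ
  rw [abs_mul, abs_of_pos (by positivity : (0:ℝ) < 1 / cesaroA δ n)]
  have h2 : 1 / cesaroA δ n ≤ 1 / ((n:ℝ) + 1) ^ δ :=
    one_div_le_one_div_of_le hppos hpow
  calc 1 / cesaroA δ n
        * |∑ k ∈ Finset.range (n + 1), cesaroA (δ - 1) (n - k) * Real.cos ((2 * k + 1) * t)|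
      ≤ (1 / ((n:ℝ)+1)^δ) * (3/δ * Real.sin t ^ (-δ)) :=
        mul_le_mul h2 hkey (abs_nonneg _) (by positivity)
    _ = 3/δ * (1 / (((n:ℝ)+1)^δ * Real.sin t ^ δ)) := by
        rw [Real.rpow_neg hs0.le]
        field_simp
    _ ≤ 3/δ * (1 / (((n:ℝ)+1)^δ * Real.sin t ^ δ) + 1 / (((n:ℝ)+1) * Real.sin t)) := by
        have hpos2 : (0:ℝ) < 1 / (((n:ℝ)+1) * Real.sin t) := by positivity
        have h3 : (0:ℝ) < 3/δ := by positivity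
        nlinarith
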